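/- arXiv:2404.06115 — 2 statements merged into one kernel-verified Lean document; each statement's English description precedes it below -/
import Mathlib

section
/- Let T_A and T_B be finite abelian groups and let r ≥ 0 be an integer. If (T_A ⊗_ℤ T_A) ⊕ T_A^{2r} is isomorphic to (T_B ⊗_ℤ T_B) ⊕ T_B^{2r} as abelian groups, then T_A is isomorphic to T_B. -/
open TensorProduct

/-- number of elements killed by `n` -/
noncomputable def cc (G : Type*) [AddCommGroup G] (n : ℕ) : ℕ :=
  Nat.card {g : G // n • g = 0}

lemma cc_congr {G H : Type*} [AddCommGroup G] [AddCommGroup H] (e : G ≃+ H) (n : ℕ) :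
    cc G n = cc H n := by
  refine Nat.card_congr (Equiv.subtypeEquiv e.toEquiv fun g => ?_)
  simp only [AddEquiv.toEquiv_eq_coe, EquivLike.coe_coe]
  rw [← map_nsmul, (AddEquiv.injective e).eq_iff' (map_zero e)]

lemma cc_prod (G H : Type*) [AddCommGroup G] [AddCommGroup H] (n : ℕ) :
    cc (G × H) n = cc G n * cc H n := by
  rw [cc, Nat.card_congr ((Equiv.subtypeEquivRight (fun p => ?_)).trans
    (Equiv.subtypeProdEquivProd (p := fun g : G => n • g = 0) (q := fun h : H => n • h = 0))),
    Nat.card_prod]; rfl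
  constructor
  · intro h; exact ⟨congrArg Prod.fst h, congrArg Prod.snd h⟩
  · rintro ⟨h1, h2⟩; exact Prod.ext h1 h2

lemma cc_pi {ι : Type*} [Fintype ι] (M : ι → Type*) [∀ i, AddCommGroup (M i)] (n : ℕ) :
    cc (∀ i, M i) n = ∏ i, cc (M i) n := by
  have e : {g : ∀ i, M i // n • g = 0} ≃ ∀ i, {x : M i // n • x = 0} :=
    (Equiv.subtypeEquivRight (fun f => by simp [funext_iff])).trans
      (Equiv.subtypePiEquivPi (p := fun i (x : M i) => n • x = 0))
  rw [cc, Nat.card_congr e, Nat.card_pi]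
  rfl

lemma cc_zmod (m n : ℕ) (hm : m ≠ 0) : cc (ZMod m) n = Nat.gcd m n := by
  haveI : NeZero m := ⟨hm⟩
  set f : ZMod m →+ ZMod m := AddMonoidHom.mk' (fun x => n • x) (fun a b => smul_add n a b) with hf
  have hker : cc (ZMod m) n = Nat.card f.ker := by
    refine Nat.card_congr (Equiv.subtypeEquivRight fun x => ?_)
    simp [hf, AddMonoidHom.mem_ker]
  have hrange : f.range = AddSubgroup.zmultiples ((n : ZMod m)) := by
    apply le_antisymm
    · rintro y ⟨x, rfl⟩
      refine ⟨(x.val : ℤ), ?_⟩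
      push_cast
      simp only [hf, AddMonoidHom.mk'_apply]
      rw [zsmul_eq_mul, nsmul_eq_mul]
      push_cast
      rw [ZMod.natCast_val, ZMod.cast_id]
      ring
    · rintro y ⟨k, rfl⟩
      refine ⟨k • (1 : ZMod m), ?_⟩
      simp only [hf, AddMonoidHom.mk'_apply, smul_comm n k]
      rw [nsmul_eq_mul, mul_one]
  have hcard_range : Nat.card f.range = m / m.gcd n := by
    rw [hrange, Nat.card_zmultiples, ZMod.addOrderOf_coe n hm]
  have h1 : m = Nat.card f.range * Nat.card f.ker := by
    have := AddSubgroup.card_eq_card_quotient_mul_card_addSubgroup (α := ZMod m) f.ker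
    rwa [Nat.card_zmod, Nat.card_congr (QuotientAddGroup.quotientKerEquivRange f).toEquiv] at this
  have hg : m.gcd n ∣ m := Nat.gcd_dvd_left m n
  have hgpos : 0 < m.gcd n := Nat.gcd_pos_of_pos_left n (Nat.pos_of_ne_zero hm)
  rw [hker]
  rw [hcard_range] at h1
  have hmg : m / m.gcd n ≠ 0 := by
    have := Nat.div_pos (Nat.le_of_dvd (Nat.pos_of_ne_zero hm) hg) hgpos
    omega
  have : m / m.gcd n * Nat.card f.ker = m / m.gcd n * (m.gcd n) := by
    rw [← h1, Nat.div_mul_cancel hg]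
  exact Nat.eq_of_mul_eq_mul_left (Nat.pos_of_ne_zero hmg) this

section ZModTensor

variable (a b : ℕ)

noncomputable def phiBil : ZMod a →ₗ[ℤ] ZMod b →ₗ[ℤ] ZMod (Nat.gcd a b) :=
  LinearMap.mk₂ ℤ
    (fun x y => ZMod.castHom (Nat.gcd_dvd_left a b) (ZMod (Nat.gcd a b)) x *
      ZMod.castHom (Nat.gcd_dvd_right a b) (ZMod (Nat.gcd a b)) y)
    (fun x x' y => by simp only [map_add, add_mul])
    (fun c x y => by simp only [map_zsmul, smul_mul_assoc])
    (fun x y y' => by simp only [map_add, mul_add])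
    (fun c x y => by simp only [map_zsmul, mul_smul_comm])

noncomputable def phi : (ZMod a) ⊗[ℤ] (ZMod b) →ₗ[ℤ] ZMod (Nat.gcd a b) :=
  TensorProduct.lift (phiBil a b)

lemma phi_tmul (x : ZMod a) (y : ZMod b) :
    phi a b (x ⊗ₜ[ℤ] y) = ZMod.castHom (Nat.gcd_dvd_left a b) (ZMod (Nat.gcd a b)) x *
      ZMod.castHom (Nat.gcd_dvd_right a b) (ZMod (Nat.gcd a b)) y := by
  exact TensorProduct.lift.tmul (f' := phiBil a b) x y

lemma gcd_smul_tmul_zero :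
    ((Nat.gcd a b : ℤ)) • ((1 : ZMod a) ⊗ₜ[ℤ] (1 : ZMod b)) = 0 := by
  have h1 : (a : ℤ) • ((1 : ZMod a) ⊗ₜ[ℤ] (1 : ZMod b)) = 0 := by
    rw [TensorProduct.smul_tmul']
    have : (a : ℤ) • (1 : ZMod a) = 0 := by
      rw [zsmul_eq_mul, mul_one, Int.cast_natCast, ZMod.natCast_self]
    rw [this, TensorProduct.zero_tmul]
  have h2 : (b : ℤ) • ((1 : ZMod a) ⊗ₜ[ℤ] (1 : ZMod b)) = 0 := by
    rw [← TensorProduct.tmul_smul]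
    have : (b : ℤ) • (1 : ZMod b) = 0 := by
      rw [zsmul_eq_mul, mul_one, Int.cast_natCast, ZMod.natCast_self]
    rw [this, TensorProduct.tmul_zero]
  rw [Nat.gcd_eq_gcd_ab a b, add_smul, mul_comm (a : ℤ), mul_comm (b : ℤ), mul_smul, mul_smul,
    h1, h2, smul_zero, smul_zero, add_zero]

noncomputable def psi : ZMod (Nat.gcd a b) →+ (ZMod a) ⊗[ℤ] (ZMod b) :=
  ZMod.lift (Nat.gcd a b)
    ⟨zmultiplesHom _ ((1 : ZMod a) ⊗ₜ[ℤ] (1 : ZMod b)), gcd_smul_tmul_zero a b⟩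

lemma psi_intCast (k : ℤ) :
    psi a b ((k : ℤ) : ZMod (Nat.gcd a b)) = k • ((1 : ZMod a) ⊗ₜ[ℤ] (1 : ZMod b)) := by
  rw [psi, ZMod.lift_coe]
  rfl

lemma key2 (i j : ℤ) : (i * j) • ((1 : ZMod a) ⊗ₜ[ℤ] (1 : ZMod b))
    = (i : ZMod a) ⊗ₜ[ℤ] (j : ZMod b) := by
  have e1 : (j : ℤ) • ((1 : ZMod a) ⊗ₜ[ℤ] (1 : ZMod b)) = (1 : ZMod a) ⊗ₜ[ℤ] (j : ZMod b) := by
    rw [← TensorProduct.tmul_smul, zsmul_eq_mul, mul_one]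
  rw [mul_smul, e1, TensorProduct.smul_tmul', zsmul_eq_mul, mul_one]

noncomputable def zmodTensorEquiv (ha : a ≠ 0) (hb : b ≠ 0) :
    (ZMod a) ⊗[ℤ] (ZMod b) ≃+ ZMod (Nat.gcd a b) := by
  haveI : NeZero a := ⟨ha⟩
  haveI : NeZero b := ⟨hb⟩
  haveI : NeZero (Nat.gcd a b) := ⟨Nat.gcd_ne_zero_left ha⟩
  have key : ∀ (x : ZMod a) (y : ZMod b),
      (psi a b).toIntLinearMap (phi a b (x ⊗ₜ[ℤ] y)) = x ⊗ₜ[ℤ] y := by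
    intro x y
    have hx : x = ((x.val : ℤ) : ZMod a) := by push_cast; rw [ZMod.natCast_val, ZMod.cast_id]
    have hy : y = ((y.val : ℤ) : ZMod b) := by push_cast; rw [ZMod.natCast_val, ZMod.cast_id]
    rw [hx, hy, phi_tmul, map_intCast, map_intCast, ← Int.cast_mul]
    simp only [AddMonoidHom.coe_toIntLinearMap]
    rw [psi_intCast]
    exact key2 a b _ _
  have hcomp : (psi a b).toIntLinearMap ∘ₗ phi a b = LinearMap.id :=
    TensorProduct.ext' key
  refine { toFun := phi a b, invFun := psi a b,
           left_inv := fun x => DFunLike.congr_fun hcomp x, right_inv := fun z => ?_,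
           map_add' := map_add _ }
  have hz : z = ((z.val : ℤ) : ZMod (Nat.gcd a b)) := by
    push_cast; rw [ZMod.natCast_val, ZMod.cast_id]
  rw [hz, psi_intCast, map_zsmul, phi_tmul, map_one, map_one, mul_one, zsmul_eq_mul, mul_one]

end ZModTensor

section Decomp

open DirectSum

variable {ι : Type} [Fintype ι] [DecidableEq ι] (q : ι → ℕ)

lemma cc_directSum (n : ℕ) (hq : ∀ i, q i ≠ 0) :
    cc (⨁ i, ZMod (q i)) n = ∏ i, Nat.gcd (q i) n := by
  rw [cc_congr (DirectSum.addEquivProd (fun i => ZMod (q i))) n, cc_pi]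
  exact Finset.prod_congr rfl fun i _ => by rw [cc_zmod _ _ (hq i), Nat.gcd_comm]

lemma cc_decomp {T : Type} [AddCommGroup T] (e : T ≃+ ⨁ i, ZMod (q i)) (n : ℕ)
    (hq : ∀ i, q i ≠ 0) : cc T n = ∏ i, Nat.gcd (q i) n := by
  rw [cc_congr e, cc_directSum q n hq]

lemma cc_tensor_decomp {T : Type} [AddCommGroup T] (e : T ≃+ ⨁ i, ZMod (q i)) (n : ℕ)
    (hq : ∀ i, q i ≠ 0) :
    cc (T ⊗[ℤ] T) n = ∏ ij : ι × ι, Nat.gcd (Nat.gcd (q ij.1) (q ij.2)) n := by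
  classical
  let el : T ≃ₗ[ℤ] (⨁ i, ZMod (q i)) := e.toIntLinearEquiv
  let E1 : T ⊗[ℤ] T ≃+ ((⨁ i, ZMod (q i)) ⊗[ℤ] (⨁ i, ZMod (q i))) :=
    (TensorProduct.congr el el).toAddEquiv
  let E2 : ((⨁ i, ZMod (q i)) ⊗[ℤ] (⨁ i, ZMod (q i))) ≃+
      ⨁ ij : ι × ι, ZMod (q ij.1) ⊗[ℤ] ZMod (q ij.2) := (TensorProduct.directSum ℤ ℤ (fun i : ι => ZMod (q i))
    (fun i : ι => ZMod (q i))).toAddEquiv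
  rw [cc_congr (H := ⨁ ij : ι × ι, ZMod (q ij.1) ⊗[ℤ] ZMod (q ij.2)) (E1.trans E2), cc_congr (DirectSum.addEquivProd _), cc_pi]
  refine Finset.prod_congr rfl fun ij _ => ?_
  rw [cc_congr (zmodTensorEquiv (q ij.1) (q ij.2) (hq ij.1) (hq ij.2)),
    cc_zmod _ _ (Nat.gcd_ne_zero_left (hq ij.1)), Nat.gcd_comm]

end Decomp

section Arith

open Finset

variable {ι : Type} [Fintype ι]

/-- number of indices with `m < v i` -/
def Ak (v : ι → ℕ) (m : ℕ) : ℕ := (Finset.univ.filter (fun i => m < v i)).card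

lemma min_eq_sum (a k : ℕ) : min a k = ∑ m ∈ Finset.range k, if m < a then 1 else 0 := by
  rw [← Finset.card_filter]
  have : (Finset.range k).filter (fun m => m < a) = Finset.range (min a k) := by
    ext m; simp [Nat.lt_min]; omega
  rw [this, Finset.card_range]

lemma sum_min (v : ι → ℕ) (k : ℕ) :
    ∑ i, min (v i) k = ∑ m ∈ Finset.range k, Ak v m := by
  simp only [min_eq_sum]
  rw [Finset.sum_comm]
  exact Finset.sum_congr rfl fun m _ => by rw [Ak, Finset.card_filter]

lemma sum_min2 (v : ι → ℕ) (k : ℕ) :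
    ∑ ij : ι × ι, min (min (v ij.1) (v ij.2)) k = ∑ m ∈ Finset.range k, (Ak v m) ^ 2 := by
  have h0 : ∀ a b : ℕ, min (min a b) k
      = ∑ m ∈ Finset.range k, (if m < a then 1 else 0) * (if m < b then 1 else 0) := by
    intro a b
    rw [min_eq_sum]
    refine Finset.sum_congr rfl fun m _ => ?_
    by_cases h1 : m < a <;> by_cases h2 : m < b <;> simp [h1, h2, lt_min_iff]
  rw [Finset.sum_congr rfl fun (ij : ι × ι) _ => h0 (v ij.1) (v ij.2), Finset.sum_comm]
  refine Finset.sum_congr rfl fun m _ => ?_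
  rw [Fintype.sum_prod_type, sq, Ak, Finset.card_filter, Finset.sum_mul_sum]

lemma partial_sums_eq {F G : ℕ → ℕ}
    (h : ∀ k, ∑ m ∈ Finset.range k, F m = ∑ m ∈ Finset.range k, G m) (m : ℕ) : F m = G m := by
  have h1 := h (m + 1)
  have h2 := h m
  rw [Finset.sum_range_succ, Finset.sum_range_succ] at h1
  omega

lemma quad_inj (r x y : ℕ) (h : x ^ 2 + 2 * r * x = y ^ 2 + 2 * r * y) : x = y := by
  nlinarith [sq_nonneg (x - y), Nat.lt_or_ge x y]

lemma card_split (v : ι → ℕ) (k : ℕ) :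
    Ak v k = (Finset.univ.filter (fun i => v i = k + 1)).card + Ak v (k + 1) := by
  simp only [Ak, Finset.card_filter]
  rw [← Finset.sum_add_distrib]
  exact Finset.sum_congr rfl fun i _ => by split_ifs <;> omega

end Arith

section PrimeArith

lemma gcd_prime_pow {P : ℕ} (hP : P.Prime) {m : ℕ} (hm : m ≠ 0) (k : ℕ) :
    Nat.gcd m (P ^ k) = P ^ (min (m.factorization P) k) := by
  obtain ⟨j, hjk, hd⟩ := (Nat.dvd_prime_pow hP).1 (Nat.gcd_dvd_right m (P ^ k))
  have hg0 : Nat.gcd m (P ^ k) ≠ 0 := Nat.gcd_ne_zero_left hm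
  have hfact : (Nat.gcd m (P ^ k)).factorization P = min (m.factorization P) k := by
    rw [Nat.factorization_gcd hm (pow_ne_zero _ hP.pos.ne')]
    simp [hP.factorization_pow, Finsupp.inf_apply]
  rw [hd] at hfact ⊢
  rw [hP.factorization_pow, Finsupp.single_eq_same] at hfact
  rw [hfact]

lemma prime_pow_eq_iff {P pi ei : ℕ} (hP : P.Prime) (hpi : pi.Prime) (k : ℕ) :
    pi ^ ei = P ^ (k + 1) ↔ (pi ^ ei).factorization P = k + 1 := by
  constructor
  · intro h
    rw [h, hP.factorization_pow, Finsupp.single_eq_same]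
  · intro h
    have hdvd : P ∣ pi ^ ei := Nat.dvd_of_factorization_pos (by omega)
    have hPpi : P = pi := (Nat.prime_dvd_prime_iff_eq hP hpi).1 (hP.dvd_of_dvd_pow hdvd)
    subst hPpi
    rw [hP.factorization_pow, Finsupp.single_eq_same] at h
    rw [h]

end PrimeArith

section Canon

def zmodCongr {m n : ℕ} (h : m = n) : ZMod m ≃+ ZMod n := by subst h; exact AddEquiv.refl _

noncomputable def canonEquiv {ι : Type} [Fintype ι] (q : ι → ℕ) :
    (∀ i, ZMod (q i)) ≃+ ∀ n : ℕ, ({i // q i = n} → ZMod n) :=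
  (AddEquiv.mk' ((Equiv.piCongrLeft' (fun i => ZMod (q i)) (Equiv.sigmaFiberEquiv q).symm).trans
      (Equiv.piCurry (fun n (i : {i // q i = n}) => ZMod (q i.1))))
    (fun _ _ => rfl)).trans
  (AddEquiv.piCongrRight (fun n => AddEquiv.piCongrRight (fun i => zmodCongr i.2)))

end Canon

section Main

open Finset

lemma side_eq {ι : Type} [Fintype ι] (r : ℕ) (q : ι → ℕ) (hq : ∀ i, q i ≠ 0)
    {P : ℕ} (hP : P.Prime) (k : ℕ) :
    (∏ ij : ι × ι, Nat.gcd (Nat.gcd (q ij.1) (q ij.2)) (P ^ k)) *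
      (∏ i, Nat.gcd (q i) (P ^ k)) ^ (2 * r)
    = P ^ (∑ m ∈ Finset.range k, ((Ak (fun i => (q i).factorization P) m) ^ 2
        + 2 * r * (Ak (fun i => (q i).factorization P) m))) := by
  set v : ι → ℕ := fun i => (q i).factorization P with hv
  have h1 : ∀ i, Nat.gcd (q i) (P ^ k) = P ^ min (v i) k := fun i => gcd_prime_pow hP (hq i) k
  have h2 : ∀ ij : ι × ι, Nat.gcd (Nat.gcd (q ij.1) (q ij.2)) (P ^ k)
      = P ^ min (min (v ij.1) (v ij.2)) k := by
    intro ij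
    rw [gcd_prime_pow hP (Nat.gcd_ne_zero_left (hq ij.1)) k,
      Nat.factorization_gcd (hq ij.1) (hq ij.2)]
    simp [Finsupp.inf_apply, hv]
  rw [Finset.prod_congr rfl fun ij _ => h2 ij, Finset.prod_congr rfl fun i _ => h1 i,
    Finset.prod_pow_eq_pow_sum, Finset.prod_pow_eq_pow_sum, ← pow_mul, ← pow_add,
    sum_min2, sum_min]
  congr 1
  rw [Finset.sum_mul, ← Finset.sum_add_distrib]
  exact Finset.sum_congr rfl fun m _ => by ring

theorem fiber_count {ι κ : Type} [Fintype ι] [Fintype κ] (r : ℕ)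
    (p : ι → ℕ) (e : ι → ℕ) (hp : ∀ i, (p i).Prime)
    (p' : κ → ℕ) (e' : κ → ℕ) (hp' : ∀ j, (p' j).Prime)
    (hcc : ∀ n, (∏ ij : ι × ι, Nat.gcd (Nat.gcd (p ij.1 ^ e ij.1) (p ij.2 ^ e ij.2)) n) *
        (∏ i, Nat.gcd (p i ^ e i) n) ^ (2 * r)
      = (∏ ij : κ × κ, Nat.gcd (Nat.gcd (p' ij.1 ^ e' ij.1) (p' ij.2 ^ e' ij.2)) n) *
        (∏ j, Nat.gcd (p' j ^ e' j) n) ^ (2 * r))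
    (n : ℕ) (hn1 : n ≠ 1) :
    (Finset.univ.filter (fun i => p i ^ e i = n)).card
      = (Finset.univ.filter (fun j => p' j ^ e' j = n)).card := by
  classical
  have hqA0 : ∀ i, p i ^ e i ≠ 0 := fun i => pow_ne_zero _ (hp i).pos.ne'
  have hqB0 : ∀ j, p' j ^ e' j ≠ 0 := fun j => pow_ne_zero _ (hp' j).pos.ne'
  by_cases hpp : ∃ P k, Nat.Prime P ∧ n = P ^ (k + 1)
  · obtain ⟨P, k, hP, rfl⟩ := hpp
    set vA : ι → ℕ := fun i => (p i ^ e i).factorization P with hvA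
    set vB : κ → ℕ := fun j => (p' j ^ e' j).factorization P with hvB
    have hs : ∀ k', ∑ m ∈ Finset.range k', ((Ak vA m) ^ 2 + 2 * r * (Ak vA m))
        = ∑ m ∈ Finset.range k', ((Ak vB m) ^ 2 + 2 * r * (Ak vB m)) := by
      intro k'
      have hx := hcc (P ^ k')
      rw [side_eq r (fun i => p i ^ e i) hqA0 hP k',
        side_eq r (fun j => p' j ^ e' j) hqB0 hP k'] at hx
      exact Nat.pow_right_injective hP.two_le hx
    have hAk : ∀ m, Ak vA m = Ak vB m := fun m => quad_inj r _ _ (partial_sums_eq hs m)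
    have h2 := card_split vA k
    have h3 := card_split vB k
    have h4 : (Finset.univ.filter (fun i => vA i = k + 1)).card
        = (Finset.univ.filter (fun j => vB j = k + 1)).card := by
      have e1 := hAk k; have e2 := hAk (k + 1); omega
    have eqA : (Finset.univ.filter (fun i => p i ^ e i = P ^ (k + 1)))
        = (Finset.univ.filter (fun i => vA i = k + 1)) :=
      Finset.filter_congr fun i _ => prime_pow_eq_iff hP (hp i) k
    have eqB : (Finset.univ.filter (fun j => p' j ^ e' j = P ^ (k + 1)))
        = (Finset.univ.filter (fun j => vB j = k + 1)) :=
      Finset.filter_congr fun j _ => prime_pow_eq_iff hP (hp' j) k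
    rw [eqA, eqB, h4]
  · have hA : ∀ i, ¬(p i ^ e i = n) := by
      intro i hqi
      rcases Nat.eq_zero_or_pos (e i) with h0 | h0
      · rw [h0, pow_zero] at hqi; exact hn1 hqi.symm
      · exact hpp ⟨p i, e i - 1, hp i, by rw [← hqi]; congr 1; omega⟩
    have hB : ∀ j, ¬(p' j ^ e' j = n) := by
      intro j hqj
      rcases Nat.eq_zero_or_pos (e' j) with h0 | h0
      · rw [h0, pow_zero] at hqj; exact hn1 hqj.symm
      · exact hpp ⟨p' j, e' j - 1, hp' j, by rw [← hqj]; congr 1; omega⟩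
    rw [Finset.filter_false_of_mem (fun i _ => hA i),
      Finset.filter_false_of_mem (fun j _ => hB j)]
    rfl

end Main

/-- if `T_A, T_B` are finite abelian groups with
`(T_A ⊗ T_A) ⊕ T_A^{2r} ≅ (T_B ⊗ T_B) ⊕ T_B^{2r}`, then `T_A ≅ T_B`. -/
theorem stmt_9 (r : ℕ) (TA TB : Type) [AddCommGroup TA] [AddCommGroup TB]
    [Finite TA] [Finite TB]
    (h : Nonempty (
      ((TA ⊗[ℤ] TA) × (Fin (2 * r) → TA))
      ≃+
      ((TB ⊗[ℤ] TB) × (Fin (2 * r) → TB)))) :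
    Nonempty (TA ≃+ TB) := by
  classical
  obtain ⟨E⟩ := h
  obtain ⟨ι, hι, p, hp, e, ⟨eA⟩⟩ := AddCommGroup.equiv_directSum_zmod_of_finite TA
  obtain ⟨κ, hκ, p', hp', e', ⟨eB⟩⟩ := AddCommGroup.equiv_directSum_zmod_of_finite TB
  have hqA0 : ∀ i, p i ^ e i ≠ 0 := fun i => pow_ne_zero _ (hp i).pos.ne'
  have hqB0 : ∀ j, p' j ^ e' j ≠ 0 := fun j => pow_ne_zero _ (hp' j).pos.ne'
  have hcc : ∀ n, (∏ ij : ι × ι, Nat.gcd (Nat.gcd (p ij.1 ^ e ij.1) (p ij.2 ^ e ij.2)) n) *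
        (∏ i, Nat.gcd (p i ^ e i) n) ^ (2 * r)
      = (∏ ij : κ × κ, Nat.gcd (Nat.gcd (p' ij.1 ^ e' ij.1) (p' ij.2 ^ e' ij.2)) n) *
        (∏ j, Nat.gcd (p' j ^ e' j) n) ^ (2 * r) := by
    intro n
    have h0 := cc_congr E n
    rw [cc_prod, cc_prod] at h0
    rw [cc_pi (fun _ : Fin (2 * r) => TA) n, cc_pi (fun _ : Fin (2 * r) => TB) n] at h0
    rw [Finset.prod_const, Finset.prod_const, Finset.card_univ, Fintype.card_fin] at h0
    rw [cc_tensor_decomp (fun i => p i ^ e i) eA n hqA0,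
      cc_tensor_decomp (fun j => p' j ^ e' j) eB n hqB0,
      cc_decomp (fun i => p i ^ e i) eA n hqA0,
      cc_decomp (fun j => p' j ^ e' j) eB n hqB0] at h0
    exact h0
  have hfib := fiber_count r p e hp p' e' hp' hcc
  let EA : TA ≃+ ∀ n : ℕ, ({i // p i ^ e i = n} → ZMod n) :=
    eA.trans ((DirectSum.addEquivProd fun i => ZMod (p i ^ e i)).trans
      (canonEquiv (fun i => p i ^ e i)))
  let EB : TB ≃+ ∀ n : ℕ, ({j // p' j ^ e' j = n} → ZMod n) :=
    eB.trans ((DirectSum.addEquivProd fun j => ZMod (p' j ^ e' j)).trans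
      (canonEquiv (fun j => p' j ^ e' j)))
  have per : ∀ n : ℕ, ({i // p i ^ e i = n} → ZMod n) ≃+ ({j // p' j ^ e' j = n} → ZMod n) := by
    intro n
    by_cases hn1 : n = 1
    · subst hn1; exact AddEquiv.ofUnique
    · have hcard : Fintype.card {i // p i ^ e i = n} = Fintype.card {j // p' j ^ e' j = n} := by
        simp only [Fintype.card_subtype]
        exact hfib n hn1
      exact AddEquiv.arrowCongr (Fintype.equivOfCardEq hcard) (AddEquiv.refl _)
  exact ⟨EA.trans ((AddEquiv.piCongrRight per).trans EB.symm)⟩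
end

section
/- Let G be a finitely generated abelian group and d ∈ G. Then there exists an element ẽ ∈ ℤ ⊕ (G/⟨d⟩) such that (ℤ ⊕ (G/⟨d⟩))/⟨ẽ⟩ is isomorphic to G. -/
open Matrix LinearMap

noncomputable def cokerCongr {ι : Type} [Fintype ι] [DecidableEq ι]
    (P A Q : Matrix ι ι ℤ) [Invertible P] [Invertible Q] :
    ((ι → ℤ) ⧸ LinearMap.range A.mulVecLin) ≃ₗ[ℤ]
      ((ι → ℤ) ⧸ LinearMap.range (P * A * Q).mulVecLin) := by
  refine Submodule.Quotient.equiv _ _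
    (LinearEquiv.ofLinear P.mulVecLin (⅟P).mulVecLin
      (by rw [← Matrix.mulVecLin_mul, mul_invOf_self, Matrix.mulVecLin_one])
      (by rw [← Matrix.mulVecLin_mul, invOf_mul_self, Matrix.mulVecLin_one])) ?_
  have h1 : (P * A * Q).mulVecLin = (P.mulVecLin.comp A.mulVecLin).comp Q.mulVecLin := by
    rw [Matrix.mulVecLin_mul, Matrix.mulVecLin_mul]
  rw [h1, LinearMap.range_comp]
  have hQ : LinearMap.range Q.mulVecLin = ⊤ := by
    rw [LinearMap.range_eq_top]
    intro x
    exact ⟨(⅟Q).mulVecLin x, by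
      rw [← LinearMap.comp_apply, ← Matrix.mulVecLin_mul, mul_invOf_self, Matrix.mulVecLin_one]
      rfl⟩
  rw [hQ, Submodule.map_top, LinearMap.range_comp]
  rfl


theorem coker_transpose {ι : Type} [Fintype ι] [DecidableEq ι] (M : Matrix ι ι ℤ) :
    Nonempty (((ι → ℤ) ⧸ LinearMap.range M.mulVecLin) ≃ₗ[ℤ]
      ((ι → ℤ) ⧸ LinearMap.range M.transpose.mulVecLin)) := by
  classical
  obtain ⟨m, snf⟩ := (LinearMap.range M.mulVecLin).smithNormalForm (Pi.basisFun ℤ ι)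
  obtain ⟨kk, bK⟩ := (LinearMap.ker M.mulVecLin).basisOfPid (Pi.basisFun ℤ ι)
  have hu : ∀ i : Fin m, ∃ u : ι → ℤ, M.mulVecLin u = (snf.bN i : ι → ℤ) := fun i => (snf.bN i).2
  choose u hu using hu
  set φ : (Fin kk ⊕ Fin m) → (ι → ℤ) := Sum.elim (fun j => (bK j : ι → ℤ)) u with hφ
  have hbKmem : ∀ j, M.mulVecLin (bK j : ι → ℤ) = 0 := by
    intro j
    have := (bK j).2
    rwa [LinearMap.mem_ker] at this
  -- linear independence of φ
  have hindep : LinearIndependent ℤ φ := by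
    rw [linearIndependent_sum]
    refine ⟨bK.linearIndependent.map' (LinearMap.ker M.mulVecLin).subtype
        (Submodule.ker_subtype _), ?_, ?_⟩
    · have hbNi : LinearIndependent ℤ (fun i => (snf.bN i : ι → ℤ)) :=
        snf.bN.linearIndependent.map' (LinearMap.range M.mulVecLin).subtype
          (Submodule.ker_subtype _)
      refine LinearIndependent.of_comp M.mulVecLin ?_
      have hcomp : (⇑M.mulVecLin ∘ φ ∘ Sum.inr) = fun i => (snf.bN i : ι → ℤ) :=
        funext fun i => hu i
      rw [hcomp]
      exact hbNi
    · rw [Submodule.disjoint_def]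
      intro x hx1 hx2
      have hx1' : x ∈ LinearMap.ker M.mulVecLin := by
        have hsub : Submodule.span ℤ (Set.range (φ ∘ Sum.inl)) ≤ LinearMap.ker M.mulVecLin := by
          rw [Submodule.span_le]
          rintro _ ⟨j, rfl⟩
          exact LinearMap.mem_ker.mpr (hbKmem j)
        exact hsub hx1
      obtain ⟨c, hc⟩ := Submodule.mem_span_range_iff_exists_fun ℤ |>.mp hx2
      have h0 : ∑ i, c i • (snf.bN i) = 0 := by
        apply Subtype.ext
        push_cast
        calc ∑ i, c i • (snf.bN i : ι → ℤ) = ∑ i, c i • M.mulVecLin (u i) := by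
              simp only [hu]
          _ = M.mulVecLin (∑ i, c i • u i) := by
              rw [map_sum]; simp only [LinearMap.map_smul]
          _ = M.mulVecLin x := by
              rw [← hc]; rfl
          _ = 0 := LinearMap.mem_ker.mp hx1'
      have hc0 : ∀ i, c i = 0 := by
        have := Fintype.linearIndependent_iff.mp snf.bN.linearIndependent c h0
        exact this
      rw [← hc]
      simp [hc0]
  -- φ spans
  have hspan : ⊤ ≤ Submodule.span ℤ (Set.range φ) := by
    intro x _
    set y : LinearMap.range M.mulVecLin := ⟨M.mulVecLin x, LinearMap.mem_range_self _ x⟩ with hy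
    set c : Fin m → ℤ := fun i => snf.bN.repr y i with hcdef
    have hker : x - ∑ i, c i • u i ∈ LinearMap.ker M.mulVecLin := by
      rw [LinearMap.mem_ker, map_sub, map_sum]
      simp only [LinearMap.map_smul, hu]
      have hyr : (y : ι → ℤ) = ∑ i, c i • (snf.bN i : ι → ℤ) := by
        conv_lhs => rw [← snf.bN.sum_repr y]
        push_cast
        rfl
      have : M.mulVecLin x = (y : ι → ℤ) := rfl
      rw [this, hyr]
      simp
    have hKspan : (LinearMap.ker M.mulVecLin : Set (ι → ℤ)) ⊆
        (Submodule.span ℤ (Set.range φ) : Set (ι → ℤ)) := by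
      intro v hv
      have hv2 : v = ∑ j, bK.repr ⟨v, hv⟩ j • (bK j : ι → ℤ) := by
        have h3 := congrArg (fun z : LinearMap.ker M.mulVecLin => (z : ι → ℤ))
          (bK.sum_repr ⟨v, hv⟩)
        simpa only [Submodule.coe_sum, Submodule.coe_smul, Submodule.coe_mk] using h3.symm
      rw [hv2]
      apply Submodule.sum_mem
      intro j _
      exact Submodule.smul_mem _ _ (Submodule.subset_span ⟨Sum.inl j, rfl⟩)
    have hx' : x = (x - ∑ i, c i • u i) + ∑ i, c i • u i := by ring
    rw [hx']
    refine Submodule.add_mem _ (hKspan hker) ?_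
    apply Submodule.sum_mem
    intro i _
    exact Submodule.smul_mem _ _ (Submodule.subset_span ⟨Sum.inr i, rfl⟩)
  let bφ : Module.Basis (Fin kk ⊕ Fin m) ℤ (ι → ℤ) := Module.Basis.mk hindep hspan
  -- cardinalities
  have hcard : kk + m = Fintype.card ι := by
    simpa using Fintype.card_congr (bφ.indexEquiv (Pi.basisFun ℤ ι))
  have hcardC : Fintype.card {j : ι // ¬ j ∈ Set.range snf.f} = kk := by
    have h1 : Fintype.card {j : ι // j ∈ Set.range snf.f} = m :=
      (Fintype.card_congr (Equiv.ofInjective snf.f snf.f.injective)).symm.trans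
        (Fintype.card_fin m)
    rw [Fintype.card_subtype_compl, h1]
    omega
  let eC : Fin kk ≃ {j : ι // ¬ j ∈ Set.range snf.f} :=
    Fintype.equivOfCardEq (by rw [Fintype.card_fin, hcardC])
  let eS : Fin m ≃ {j : ι // j ∈ Set.range snf.f} := Equiv.ofInjective snf.f snf.f.injective
  let γ : (Fin kk ⊕ Fin m) ≃ ι :=
    (Equiv.sumCongr eC eS).trans ((Equiv.sumComm _ _).trans
      (Equiv.sumCompl (fun j => j ∈ Set.range snf.f)))
  let w : Module.Basis ι ℤ (ι → ℤ) := bφ.reindex γ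
  let b : ι → ℤ := fun j => if h : ∃ i, snf.f i = j then snf.a h.choose else 0
  have hγr : ∀ i : Fin m, γ (Sum.inr i) = snf.f i := by
    intro i
    simp [γ, eS]
  have hkey : ∀ j : ι, M.mulVecLin (w j) = b j • (snf.bM j : ι → ℤ) := by
    intro j
    obtain ⟨x, rfl⟩ := γ.surjective j
    have hw : w (γ x) = φ x := by
      simp only [w, Module.Basis.reindex_apply, Equiv.symm_apply_apply, bφ, Module.Basis.coe_mk]
    rw [hw]
    cases x with
    | inl j0 =>
        have hj : ¬ ∃ i, snf.f i = γ (Sum.inl j0) := by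
          rintro ⟨i, hi⟩
          have h1 : γ (Sum.inl j0) = (eC j0 : ι) := by simp [γ]
          have h2 : (eC j0 : ι) ∉ Set.range snf.f := (eC j0).2
          exact h2 ⟨i, by rw [hi, h1]⟩
        have hz : M.mulVecLin (φ (Sum.inl j0)) = 0 := hbKmem j0
        rw [hz]
        simp only [b]
        rw [dif_neg hj]
        simp
    | inr i =>
        have hj : γ (Sum.inr i) = snf.f i := hγr i
        have h1 : M.mulVecLin (φ (Sum.inr i)) = (snf.bN i : ι → ℤ) := hu i
        rw [h1, snf.snf i]
        have hex : ∃ i', snf.f i' = γ (Sum.inr i) := ⟨i, hj.symm⟩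
        simp only [b]
        rw [dif_pos hex]
        have h5 : hex.choose = i := snf.f.injective (by rw [hex.choose_spec, hj])
        rw [h5, hj]
  -- matrices
  set s : Module.Basis ι ℤ (ι → ℤ) := Pi.basisFun ℤ ι with hs
  set W : Matrix ι ι ℤ := s.toMatrix ⇑w with hW
  set U : Matrix ι ι ℤ := s.toMatrix ⇑snf.bM with hU
  haveI : Invertible W := s.invertibleToMatrix w
  haveI : Invertible U := s.invertibleToMatrix snf.bM
  have hMW : M * W = U * Matrix.diagonal b := by
    ext x j
    have hWcol : ∀ y, W y j = w j y := by
      intro y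
      simp [hW, Module.Basis.toMatrix_apply, hs, Pi.basisFun_repr]
    have hUcol : ∀ y, U x y = (snf.bM y : ι → ℤ) x := by
      intro y
      simp [hU, Module.Basis.toMatrix_apply, hs, Pi.basisFun_repr]
    have hl : (M * W) x j = (M.mulVecLin (w j)) x := by
      rw [Matrix.mul_apply, Matrix.mulVecLin_apply]
      simp only [Matrix.mulVec, dotProduct]
      exact Finset.sum_congr rfl fun y _ => by rw [hWcol y]
    rw [hl, hkey j, Matrix.mul_diagonal, hUcol j]
    simp [mul_comm]
  have hM : M = U * Matrix.diagonal b * ⅟W := by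
    rw [← hMW, Matrix.mul_assoc, mul_invOf_self, Matrix.mul_one]
  have hMT : M.transpose = (⅟W).transpose * Matrix.diagonal b * U.transpose := by
    rw [hM]
    simp [Matrix.transpose_mul, Matrix.diagonal_transpose, Matrix.mul_assoc]
  have h1 : LinearMap.range M.mulVecLin
      = LinearMap.range (U * Matrix.diagonal b * ⅟W).mulVecLin := by rw [← hM]
  have h2 : LinearMap.range M.transpose.mulVecLin
      = LinearMap.range ((⅟W).transpose * Matrix.diagonal b * U.transpose).mulVecLin := by
    rw [← hMT]
  haveI : Invertible ((⅟W).transpose) := Matrix.invertibleTranspose _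
  haveI : Invertible (U.transpose) := Matrix.invertibleTranspose _
  exact ⟨(Submodule.quotEquivOfEq _ _ h1).trans
    ((cokerCongr U (Matrix.diagonal b) (⅟W)).symm.trans
      ((cokerCongr ((⅟W).transpose) (Matrix.diagonal b) (U.transpose)).trans
        (Submodule.quotEquivOfEq _ _ h2.symm)))⟩


section Key

variable {G : Type} [AddCommGroup G] (d : G) {ι₀ : Type} [Fintype ι₀] [DecidableEq ι₀]

theorem key (a : ι₀ → ℕ)
    (ψ : (G ⧸ AddSubgroup.zmultiples d) ≃+ ((i : ι₀) → ZMod (a i))) :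
    ∃ e : ℤ × (G ⧸ AddSubgroup.zmultiples d),
      Nonempty (((ℤ × (G ⧸ AddSubgroup.zmultiples d)) ⧸ AddSubgroup.zmultiples e) ≃+ G) := by
  classical
  set Q := G ⧸ AddSubgroup.zmultiples d with hQ
  set π : G →+ Q := QuotientAddGroup.mk' (AddSubgroup.zmultiples d) with hπ
  have hzero : ∀ x : G, π x = 0 ↔ x ∈ AddSubgroup.zmultiples d := fun x =>
    QuotientAddGroup.eq_zero_iff x
  have hπd : π d = 0 := (hzero d).mpr (AddSubgroup.mem_zmultiples d)
  have hπsurj : Function.Surjective π := QuotientAddGroup.mk'_surjective _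
  set n : ℕ := addOrderOf d with hn
  set y : ι₀ → Q := fun i => ψ.symm (Pi.single i 1) with hy
  have hz : ∀ i, ∃ g : G, π g = y i := fun i => hπsurj (y i)
  choose z hz using hz
  -- the coefficients c
  have hc : ∀ i, ∃ k : ℤ, k • d = (a i : ℤ) • z i := by
    intro i
    have h1 : π ((a i : ℤ) • z i) = 0 := by
      rw [map_zsmul, hz i]
      have h2 : (a i : ℤ) • (Pi.single i (1 : ZMod (a i)) : (j : ι₀) → ZMod (a j)) = 0 := by
        ext j
        by_cases hji : j = i
        · subst hji
          simp only [Pi.smul_apply, Pi.single_eq_same, Pi.zero_apply, Int.smul_one_eq_cast]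
          push_cast
          exact ZMod.natCast_self (a j)
        · simp [Pi.single_eq_of_ne hji]
      have : (a i : ℤ) • y i = ψ.symm ((a i : ℤ) •
          (Pi.single i (1 : ZMod (a i)) : (j : ι₀) → ZMod (a j))) := by
        rw [map_zsmul]
      rw [this, h2, map_zero]
    rw [hzero] at h1
    exact AddSubgroup.mem_zmultiples_iff.mp h1
  choose c hc using hc
  -- index type and matrices
  set M₂ : Matrix (Unit ⊕ ι₀) (Unit ⊕ ι₀) ℤ := fun r s =>
    Sum.elim (fun _ : Unit => Sum.elim (fun _ : Unit => (n : ℤ)) (fun i => - c i) s)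
      (fun i => Sum.elim (fun _ : Unit => (0 : ℤ)) (fun j => if i = j then (a j : ℤ) else 0) s) r
    with hM₂
  -- the surjection onto G
  set ρ₂ : ((Unit ⊕ ι₀) → ℤ) →ₗ[ℤ] G :=
    Fintype.linearCombination ℤ (Sum.elim (fun _ => d) z) with hρ₂
  have hρ₂app : ∀ x, ρ₂ x = x (.inl ()) • d + ∑ i, x (.inr i) • z i := by
    intro x
    rw [hρ₂, Fintype.linearCombination_apply, Fintype.sum_sum_type]
    simp
  -- lifting coordinates
  have hlift : ∀ v : (i : ι₀) → ZMod (a i), ∃ t : ι₀ → ℤ,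
      ∀ i, ((t i : ℤ) : ZMod (a i)) = v i := by
    intro v
    choose t ht using fun i => ZMod.intCast_surjective (v i)
    exact ⟨t, ht⟩
  -- ψ applied to combinations of y
  have hψy : ∀ t : ι₀ → ℤ, ψ (∑ i, t i • y i) = fun j => ((t j : ℤ) : ZMod (a j)) := by
    intro t
    rw [map_sum]
    have : ∀ i, ψ (t i • y i) = Pi.single i ((t i : ℤ) : ZMod (a i)) := by
      intro i
      rw [map_zsmul, hy]
      simp only [AddEquiv.apply_symm_apply]
      rw [← Pi.single_smul, Int.smul_one_eq_cast]
    simp only [this]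
    exact Finset.univ_sum_single _
  have hρ₂surj : Function.Surjective ρ₂ := by
    intro g
    obtain ⟨t, ht⟩ := hlift (ψ (π g))
    have h1 : π (∑ i, t i • z i) = π g := by
      have : π (∑ i, t i • z i) = ∑ i, t i • y i := by
        rw [map_sum]; simp only [map_zsmul, hz]
      rw [this]
      apply ψ.injective
      rw [hψy]
      exact funext ht |>.symm ▸ rfl
    have h2 : g - ∑ i, t i • z i ∈ AddSubgroup.zmultiples d := by
      rw [← hzero]
      rw [map_sub, h1, sub_self]
    obtain ⟨s, hs⟩ := AddSubgroup.mem_zmultiples_iff.mp h2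
    refine ⟨Sum.elim (fun _ => s) t, ?_⟩
    rw [hρ₂app]
    simp only [Sum.elim_inl, Sum.elim_inr]
    rw [hs]
    abel
  -- mulVec computations
  have hmv₂ : ∀ (s : ℤ) (t : ι₀ → ℤ) (r : Unit ⊕ ι₀),
      M₂.mulVecLin (Sum.elim (fun _ => s) t) r =
      Sum.elim (fun _ : Unit => (n:ℤ) * s + ∑ i, (-c i) * t i)
        (fun i => (a i : ℤ) * t i) r := by
    intro s t r
    rw [Matrix.mulVecLin_apply]
    show ∑ j, M₂ r j * (Sum.elim (fun _ => s) t) j = _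
    rw [Fintype.sum_sum_type]
    cases r with
    | inl u =>
      cases u
      rw [Fintype.sum_unique]
      simp only [hM₂, Sum.elim_inl, Sum.elim_inr]
    | inr i =>
      rw [Fintype.sum_unique]
      simp only [hM₂, Sum.elim_inl, Sum.elim_inr]
      rw [zero_mul, zero_add]
      simp only [ite_mul, zero_mul]
      rw [Finset.sum_ite_eq]
      simp
  have hmv₁ : ∀ (s : ℤ) (t : ι₀ → ℤ) (r : Unit ⊕ ι₀),
      M₂.transpose.mulVecLin (Sum.elim (fun _ => s) t) r =
      Sum.elim (fun _ : Unit => (n:ℤ) * s)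
        (fun i => (- c i) * s + (a i : ℤ) * t i) r := by
    intro s t r
    rw [Matrix.mulVecLin_apply]
    show ∑ j, M₂.transpose r j * (Sum.elim (fun _ => s) t) j = _
    rw [Fintype.sum_sum_type]
    cases r with
    | inl u =>
      cases u
      rw [Fintype.sum_unique]
      simp only [Matrix.transpose_apply]
      simp only [Matrix.transpose_apply, hM₂, Sum.elim_inl, Sum.elim_inr]
      simp
    | inr i =>
      rw [Fintype.sum_unique]
      simp only [Matrix.transpose_apply]
      simp only [Matrix.transpose_apply, hM₂, Sum.elim_inl, Sum.elim_inr]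
      congr 1
      simp only [ite_mul, zero_mul]
      rw [Finset.sum_ite_eq']
      simp
  -- kernel of ρ₂
  have hker₂ : LinearMap.ker ρ₂ = LinearMap.range M₂.mulVecLin := by
    apply le_antisymm
    · intro x hx
      rw [LinearMap.mem_ker, hρ₂app] at hx
      have h1 : ∀ i, ((x (Sum.inr i) : ℤ) : ZMod (a i)) = 0 := by
        have h2 : π (x (Sum.inl ()) • d + ∑ i, x (Sum.inr i) • z i) = 0 := by
          rw [hx, map_zero]
        rw [map_add, map_zsmul, hπd, smul_zero, zero_add, map_sum] at h2
        simp only [map_zsmul, hz] at h2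
        have h3 := congrArg ψ h2
        rw [hψy, map_zero] at h3
        intro i
        exact congrFun h3 i
      have h4 : ∀ i, (a i : ℤ) ∣ x (Sum.inr i) := fun i =>
        (ZMod.intCast_zmod_eq_zero_iff_dvd _ _).mp (h1 i)
      choose t' ht' using h4
      have hzsum : ∀ i, x (Sum.inr i) • z i = (t' i * c i) • d := by
        intro i
        calc x (Sum.inr i) • z i = ((a i : ℤ) * t' i) • z i := by rw [← ht' i]
          _ = (t' i * (a i : ℤ)) • z i := by rw [mul_comm]
          _ = t' i • ((a i : ℤ) • z i) := by rw [mul_smul]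
          _ = t' i • (c i • d) := by rw [← hc i]
          _ = (t' i * c i) • d := by rw [← mul_smul]
      have h5 : (x (Sum.inl ()) + ∑ i, t' i * c i) • d = 0 := by
        rw [add_smul, Finset.sum_smul]
        rw [← hx]
        congr 1
        apply Finset.sum_congr rfl
        intro i _
        exact (hzsum i).symm
      obtain ⟨s', hs'⟩ : (n : ℤ) ∣ (x (Sum.inl ()) + ∑ i, t' i * c i) :=
        addOrderOf_dvd_iff_zsmul_eq_zero.mpr h5
      refine ⟨Sum.elim (fun _ => s') t', ?_⟩
      funext r
      rw [hmv₂]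
      cases r with
      | inl u =>
        cases u
        simp only [Sum.elim_inl]
        have hneg : ∑ i, (-c i) * t' i = - ∑ i, t' i * c i := by
          rw [← Finset.sum_neg_distrib]
          apply Finset.sum_congr rfl
          intro i _
          ring
        rw [hneg, ← hs']
        ring
      | inr i =>
        simp only [Sum.elim_inr]
        exact (ht' i).symm
    · rw [Matrix.range_mulVecLin, Submodule.span_le]
      rintro _ ⟨j, rfl⟩
      rw [SetLike.mem_coe, LinearMap.mem_ker, hρ₂app]
      cases j with
      | inl u =>
        cases u
        simp only [Matrix.col_apply, Matrix.transpose_apply, Matrix.transpose_transpose]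
        simp only [Matrix.transpose_apply, hM₂, Sum.elim_inl, Sum.elim_inr]
        have hnd : ((n : ℤ)) • d = 0 := addOrderOf_dvd_iff_zsmul_eq_zero.mp dvd_rfl
        rw [hnd]
        simp
      | inr i =>
        simp only [Matrix.col_apply, Matrix.transpose_apply, Matrix.transpose_transpose]
        simp only [Matrix.transpose_apply, hM₂, Sum.elim_inl, Sum.elim_inr]
        have hsum : ∑ j, (if j = i then (a i : ℤ) else 0) • z j = (a i : ℤ) • z i := by
          have hj : ∀ j, (if j = i then (a i : ℤ) else 0) • z j
              = if j = i then (a i : ℤ) • z j else 0 := by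
            intro j; split <;> simp
          simp only [hj]
          rw [Finset.sum_ite_eq']
          simp
        rw [hsum, ← hc i]
        simp
  -- the map ρ₁ to ℤ × Π ZMod (a i)
  set e' : ℤ × ((i : ι₀) → ZMod (a i)) :=
    ((n : ℤ), fun i => ((- c i : ℤ) : ZMod (a i))) with he'
  set S : Submodule ℤ (ℤ × ((i : ι₀) → ZMod (a i))) := Submodule.span ℤ {e'} with hS
  set ρ₁ : ((Unit ⊕ ι₀) → ℤ) →ₗ[ℤ] ℤ × ((i : ι₀) → ZMod (a i)) :=
    LinearMap.prod (LinearMap.proj (Sum.inl ()))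
      (LinearMap.pi fun i =>
        (Int.castAddHom (ZMod (a i))).toIntLinearMap ∘ₗ LinearMap.proj (Sum.inr i)) with hρ₁
  have hρ₁app : ∀ x, ρ₁ x = (x (Sum.inl ()), fun i => ((x (Sum.inr i) : ℤ) : ZMod (a i))) :=
    fun x => rfl
  set ρ : ((Unit ⊕ ι₀) → ℤ) →ₗ[ℤ] (ℤ × ((i : ι₀) → ZMod (a i))) ⧸ S := S.mkQ ∘ₗ ρ₁ with hρ
  have hρsurj : Function.Surjective ρ := by
    have h1 : Function.Surjective ρ₁ := by
      rintro ⟨s, v⟩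
      obtain ⟨t, ht⟩ := hlift v
      refine ⟨Sum.elim (fun _ => s) t, ?_⟩
      rw [hρ₁app]
      simp only [Sum.elim_inl, Sum.elim_inr]
      exact Prod.ext rfl (funext ht)
    exact (S.mkQ_surjective).comp h1
  have hmemker : ∀ x, x ∈ LinearMap.ker ρ ↔ ∃ k : ℤ, k • e' = ρ₁ x := by
    intro x
    rw [LinearMap.mem_ker, hρ, LinearMap.comp_apply, Submodule.mkQ_apply,
      Submodule.Quotient.mk_eq_zero, hS]
    exact Submodule.mem_span_singleton
  have hker₁ : LinearMap.ker ρ = LinearMap.range M₂.transpose.mulVecLin := by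
    apply le_antisymm
    · intro x hx
      obtain ⟨k, hk⟩ := (hmemker x).mp hx
      rw [hρ₁app, he'] at hk
      have hk1 : k * (n : ℤ) = x (Sum.inl ()) := by
        have := congrArg Prod.fst hk
        simpa [smul_eq_mul] using this
      have hk2 : ∀ i, ((x (Sum.inr i) + k * c i : ℤ) : ZMod (a i)) = 0 := by
        intro i
        have h6 := congrFun (congrArg Prod.snd hk) i
        simp only [Prod.smul_snd, Pi.smul_apply] at h6
        have h7 : (k • ((- c i : ℤ) : ZMod (a i))) = ((- (k * c i) : ℤ) : ZMod (a i)) := by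
          rw [zsmul_eq_mul]
          push_cast
          ring
        rw [h7] at h6
        push_cast
        push_cast at h6
        rw [← h6]
        ring
      have h4 : ∀ i, (a i : ℤ) ∣ (x (Sum.inr i) + k * c i) := fun i =>
        (ZMod.intCast_zmod_eq_zero_iff_dvd _ _).mp (hk2 i)
      choose t' ht' using h4
      refine ⟨Sum.elim (fun _ => k) t', ?_⟩
      funext r
      rw [hmv₁]
      cases r with
      | inl u =>
        cases u
        simp only [Sum.elim_inl]
        rw [mul_comm]
        exact hk1
      | inr i =>
        simp only [Sum.elim_inr]
        linarith [ht' i]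
    · rw [Matrix.range_mulVecLin, Submodule.span_le]
      rintro _ ⟨j, rfl⟩
      rw [SetLike.mem_coe]
      apply (hmemker _).mpr
      cases j with
      | inl u =>
        cases u
        refine ⟨1, ?_⟩
        rw [hρ₁app, one_smul, he']
        apply Prod.ext
        · simp only [Matrix.col_apply, Matrix.transpose_apply, Matrix.transpose_transpose]
          simp only [Matrix.transpose_apply, Matrix.transpose_transpose, hM₂,
            Sum.elim_inl, Sum.elim_inr]
        · funext i
          simp only [Matrix.col_apply, Matrix.transpose_apply, Matrix.transpose_transpose]
          simp only [Matrix.transpose_apply, Matrix.transpose_transpose, hM₂,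
            Sum.elim_inl, Sum.elim_inr]
      | inr i =>
        refine ⟨0, ?_⟩
        rw [hρ₁app, zero_smul]
        apply Prod.ext
        · simp only [Matrix.col_apply, Matrix.transpose_apply, Matrix.transpose_transpose]
          simp only [Matrix.transpose_apply, Matrix.transpose_transpose, hM₂,
            Sum.elim_inl, Sum.elim_inr]
          rfl
        · funext j
          simp only [Matrix.col_apply, Matrix.transpose_apply, Matrix.transpose_transpose]
          simp only [Matrix.transpose_apply, Matrix.transpose_transpose, hM₂,
            Sum.elim_inl, Sum.elim_inr]
          by_cases hij : i = j
          · subst hij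
            simp only [if_pos rfl]
            push_cast
            simp [ZMod.natCast_self]
          · simp [hij]
  -- assemble the isomorphism in module land
  obtain ⟨eT⟩ := coker_transpose M₂
  have F : ((ℤ × ((i : ι₀) → ZMod (a i))) ⧸ S) ≃ₗ[ℤ] G :=
    ((((LinearMap.quotKerEquivOfSurjective ρ hρsurj).symm.trans
      (Submodule.quotEquivOfEq _ _ hker₁)).trans eT.symm).trans
      (Submodule.quotEquivOfEq _ _ hker₂.symm)).trans
      (LinearMap.quotKerEquivOfSurjective ρ₂ hρ₂surj)
  -- back to group land
  set e : ℤ × Q := ((n : ℤ), ψ.symm (fun i => ((- c i : ℤ) : ZMod (a i)))) with he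
  set χ : (ℤ × Q) →+ (ℤ × ((i : ι₀) → ZMod (a i))) :=
    AddMonoidHom.prodMap (AddMonoidHom.id ℤ) ψ.toAddMonoidHom with hχ
  have hχe : χ e = e' := by
    rw [hχ, he, he']
    apply Prod.ext
    · rfl
    · show ψ (ψ.symm _) = _
      rw [AddEquiv.apply_symm_apply]
  have hχinj : Function.Injective χ :=
    Function.Injective.prodMap (fun _ _ h => h) ψ.injective
  have hχsurj : Function.Surjective χ :=
    Function.Surjective.prodMap (fun p => ⟨p, rfl⟩) ψ.surjective
  set F₀ : (ℤ × Q) →+ G :=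
    (F.toAddMonoidHom.comp S.mkQ.toAddMonoidHom).comp χ with hF₀
  have hF₀surj : Function.Surjective F₀ := by
    have hcomp : ⇑F₀ = (⇑F ∘ ⇑S.mkQ) ∘ ⇑χ := rfl
    rw [hcomp]
    exact (F.surjective.comp S.mkQ_surjective).comp hχsurj
  have hkerF₀ : F₀.ker = AddSubgroup.zmultiples e := by
    ext x
    rw [AddMonoidHom.mem_ker, AddSubgroup.mem_zmultiples_iff]
    constructor
    · intro hx
      have h1 : S.mkQ (χ x) = 0 := by
        apply F.injective
        rw [map_zero]
        exact hx
      rw [Submodule.mkQ_apply, Submodule.Quotient.mk_eq_zero, hS] at h1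
      obtain ⟨k, hk⟩ := Submodule.mem_span_singleton.mp h1
      refine ⟨k, hχinj ?_⟩
      rw [map_zsmul, hχe]
      exact hk
    · rintro ⟨k, rfl⟩
      show F (S.mkQ (χ (k • e))) = 0
      rw [map_zsmul, hχe]
      have he'S : S.mkQ e' = 0 := by
        rw [Submodule.mkQ_apply, Submodule.Quotient.mk_eq_zero, hS]
        exact Submodule.mem_span_singleton_self e'
      rw [map_zsmul, he'S, smul_zero, map_zero]
  refine ⟨e, ⟨?_⟩⟩
  have heq : ((ℤ × Q) ⧸ AddSubgroup.zmultiples e) ≃+ ((ℤ × Q) ⧸ F₀.ker) :=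
    QuotientAddGroup.quotientAddEquivOfEq hkerF₀.symm
  exact heq.trans (QuotientAddGroup.quotientKerEquivOfSurjective F₀ hF₀surj)

end Key

/-- if `G` is a finitely generated abelian group and `d ∈ G`, then there
exists `ẽ ∈ ℤ ⊕ (G/⟨d⟩)` such that `(ℤ ⊕ (G/⟨d⟩))/⟨ẽ⟩ ≅ G`. -/
theorem stmt_14 (G : Type) [AddCommGroup G] [AddGroup.FG G] (d : G) :
    ∃ e : ℤ × (G ⧸ AddSubgroup.zmultiples d),
      Nonempty (((ℤ × (G ⧸ AddSubgroup.zmultiples d)) ⧸ AddSubgroup.zmultiples e) ≃+ G) := by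
  classical
  obtain ⟨r, ι, fι, p, hp, epow, ⟨f⟩⟩ :=
    AddCommGroup.equiv_free_prod_directSum_zmod (G ⧸ AddSubgroup.zmultiples d)
  letI := fι
  letI : DecidableEq ι := Classical.decEq ι
  set A : Fin r ⊕ ι → ℕ := Sum.elim (fun _ => 0) (fun i => p i ^ epow i) with hA
  have g1 : (Fin r →₀ ℤ) ≃+ (Fin r → ℤ) := Finsupp.addEquivFunOnFinite
  have g2 : (DirectSum ι fun i => ZMod (p i ^ epow i)) ≃+ ((i : ι) → ZMod (p i ^ epow i)) :=
    AddEquiv.mk' DFinsupp.equivFunOnFintype fun x y => rfl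
  have g3 : ((j : Fin r ⊕ ι) → ZMod (A j)) ≃+
      ((Fin r → ℤ) × ((i : ι) → ZMod (p i ^ epow i))) :=
    AddEquiv.mk' (Equiv.sumPiEquivProdPi fun j => ZMod (A j)) fun x y => rfl
  exact key d A (f.trans ((g1.prodCongr g2).trans g3.symm))
end
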